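/- The Green function solves the fractional heat equation: for every x ∈ ℝ, the map t ↦ G_{α,δ}(t,x) is differentiable on (0,∞) and ∂_t G_{α,δ}(t,x) = (1/(2π)) ∫_ℝ exp(−i x λ) ψ_{α,δ}(λ) exp(ψ_{α,δ}(λ) t) dλ, i.e. ∂_t G_{α,δ}(t,·) equals the fractional derivative D^α_δ applied to G_{α,δ}(t,·). -/

import Mathlib

open MeasureTheory Filter Asymptotics

/-- The largest even integer not exceeding `α` (as a real number). -/
noncomputable def evenPart (α : ℝ) : ℝ := 2 * (⌊α / 2⌋ : ℝ)

/-- The symbol `ψ_{α,δ}(λ) = -|λ|^α exp(-i δ (π/2) sgn λ)` of the fractional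
derivative operator. -/
noncomputable def psiSymb (α δ : ℝ) (l : ℝ) : ℂ :=
  -((|l| ^ α : ℝ) : ℂ) *
    Complex.exp (-Complex.I * ((δ * (Real.pi / 2) * Real.sign l : ℝ) : ℂ))

/-- The Green function `G_{α,δ}(t,x) = (1/(2π)) ∫ exp(-i x λ) exp(ψ_{α,δ}(λ) t) dλ`. -/
noncomputable def greenG (α δ : ℝ) (t x : ℝ) : ℂ :=
  ((1 / (2 * Real.pi) : ℝ) : ℂ) *
    ∫ l : ℝ, Complex.exp (-Complex.I * (x : ℂ) * (l : ℂ)) *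
      Complex.exp (psiSymb α δ l * (t : ℂ))

open Set in
lemma my_measurable_realSign : Measurable Real.sign := by
  unfold Real.sign
  exact Measurable.ite measurableSet_Iio measurable_const
    (Measurable.ite measurableSet_Ioi measurable_const measurable_const)

lemma my_measurable_psiSymb (α δ : ℝ) (hα : 0 ≤ α) : Measurable (psiSymb α δ) := by
  unfold psiSymb
  apply Measurable.mul
  · exact (Complex.measurable_ofReal.comp
      (((Real.continuous_rpow_const hα).comp continuous_abs).measurable)).neg
  · exact Complex.measurable_exp.comp
      (measurable_const.mul (Complex.measurable_ofReal.comp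
        ((measurable_const.mul my_measurable_realSign))))

lemma my_re_psiSymb (α δ l : ℝ) :
    (psiSymb α δ l).re = -(|l| ^ α * Real.cos (δ * (Real.pi / 2) * Real.sign l)) := by
  simp [psiSymb, Complex.mul_re, Complex.exp_re, Complex.exp_im]

lemma my_norm_psiSymb (α δ l : ℝ) : ‖psiSymb α δ l‖ = |l| ^ α := by
  rw [psiSymb, norm_mul, norm_neg, Complex.norm_real, Complex.norm_exp]
  simp [abs_of_nonneg (Real.rpow_nonneg (abs_nonneg l) α)]

open Set in
lemma my_integrable_aux {a q s : ℝ} (ha : 0 < a) (hq : 0 < q) (hs : 0 ≤ s) :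
    Integrable (fun x : ℝ => |x| ^ s * Real.exp (-a * |x| ^ q)) := by
  set f : ℝ → ℝ := fun y => y ^ s * Real.exp (-a * y ^ q) with hf
  have hIoi : IntegrableOn f (Ioi 0) := by
    have h1 : IntegrableOn (fun y : ℝ => y ^ ((s + 1) / q - 1) * Real.exp (-a * y)) (Ioi 0) := by
      have hpos : 0 < (s + 1) / q := by positivity
      have := integrableOn_rpow_mul_exp_neg_mul_rpow (p := 1) (s := (s + 1) / q - 1) (b := a)
        (by linarith) one_pos ha
      simpa using this
    have h2 := (integrableOn_Ioi_comp_rpow_iff'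
      (fun y => y ^ ((s + 1) / q - 1) * Real.exp (-a * y)) (ne_of_gt hq)).mpr h1
    refine h2.congr_fun (fun x hx => ?_) measurableSet_Ioi
    have hx0 : (0 : ℝ) < x := hx
    have e1 : (x ^ q) ^ ((s + 1) / q - 1) = x ^ (s + 1 - q) := by
      rw [← Real.rpow_mul hx0.le]
      congr 1
      field_simp
    dsimp only
    rw [smul_eq_mul, e1, hf]
    have e2 : x ^ (q - 1) * (x ^ (s + 1 - q) * Real.exp (-a * x ^ q))
        = x ^ s * Real.exp (-a * x ^ q) := by
      rw [← mul_assoc, ← Real.rpow_add hx0]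
      ring_nf
    simpa using e2
  have habs : IntegrableOn (fun x => f |x|) (Ioi 0) :=
    hIoi.congr_fun (fun x hx => by rw [abs_of_pos hx]) measurableSet_Ioi
  have hIic : IntegrableOn (fun x => f |x|) (Iic 0) := by
    rw [← Measure.map_neg_eq_self (volume : Measure ℝ)]
    have m : MeasurableEmbedding fun x : ℝ => -x := (Homeomorph.neg ℝ).measurableEmbedding
    rw [m.integrableOn_map_iff]
    simp_rw [Function.comp_def, abs_neg, neg_preimage, neg_Iic, neg_zero]
    exact (integrableOn_Ici_iff_integrableOn_Ioi (by finiteness)).mpr habs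
  have h := hIic.union habs
  rwa [Iic_union_Ioi, integrableOn_univ] at h

theorem statement11 (α δ : ℝ) (hα : 0 < α) (hαint : ∀ n : ℕ, α ≠ n)
    (hδ : |δ| ≤ min (α - evenPart α) (2 + evenPart α - α))
    (x : ℝ) (t : ℝ) (ht : 0 < t) :
    HasDerivAt (fun s : ℝ => greenG α δ s x)
      (((1 / (2 * Real.pi) : ℝ) : ℂ) *
        ∫ l : ℝ, Complex.exp (-Complex.I * (x : ℂ) * (l : ℂ)) *
          (psiSymb α δ l * Complex.exp (psiSymb α δ l * (t : ℂ)))) t := by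
  have hπ := Real.pi_pos
  set ψ : ℝ → ℂ := psiSymb α δ with hψdef
  -- |δ| < 1
  have hδ1 : |δ| < 1 := by
    by_contra h
    push_neg at h
    have h1 : (1 : ℝ) ≤ α - evenPart α := le_trans h (hδ.trans (min_le_left _ _))
    have h2 : (1 : ℝ) ≤ 2 + evenPart α - α := le_trans h (hδ.trans (min_le_right _ _))
    have hα' : α = 2 * (⌊α / 2⌋ : ℝ) + 1 := by unfold evenPart at h1 h2; linarith
    have hk : (0 : ℤ) ≤ ⌊α / 2⌋ := by
      by_contra hk
      push_neg at hk
      have hk1 : ⌊α / 2⌋ ≤ -1 := by omega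
      have : (⌊α / 2⌋ : ℝ) ≤ -1 := by exact_mod_cast hk1
      linarith
    refine hαint (2 * ⌊α / 2⌋ + 1).toNat ?_
    have : ((2 * ⌊α / 2⌋ + 1).toNat : ℝ) = 2 * (⌊α / 2⌋ : ℝ) + 1 := by
      rw [← Int.cast_natCast, Int.toNat_of_nonneg (by omega)]
      push_cast
      ring
    rw [this]
    exact hα'
  set c : ℝ := Real.cos (|δ| * (Real.pi / 2)) with hc
  have hcpos : 0 < c := by
    apply Real.cos_pos_of_mem_Ioo
    constructor
    · nlinarith [abs_nonneg δ]
    · nlinarith [abs_nonneg δ]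
  have hcle1 : c ≤ 1 := Real.cos_le_one _
  have hrec : ∀ l : ℝ, (ψ l).re ≤ -(c * |l| ^ α) := by
    intro l
    rw [hψdef, my_re_psiSymb]
    have hcc : c ≤ Real.cos (δ * (Real.pi / 2) * Real.sign l) := by
      rcases Real.sign_apply_eq l with h | h | h <;> rw [h]
      · rw [mul_neg_one, Real.cos_neg, ← Real.cos_abs, abs_mul,
          abs_of_pos (by positivity : (0 : ℝ) < Real.pi / 2)]
      · rw [mul_zero, Real.cos_zero]; exact hcle1
      · rw [mul_one, ← Real.cos_abs, abs_mul,
          abs_of_pos (by positivity : (0 : ℝ) < Real.pi / 2)]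
    have h0 : (0 : ℝ) ≤ |l| ^ α := Real.rpow_nonneg (abs_nonneg l) α
    nlinarith
  -- the integrand and its derivative
  set F : ℝ → ℝ → ℂ := fun s l =>
    Complex.exp (-Complex.I * (x : ℂ) * (l : ℂ)) * Complex.exp (ψ l * (s : ℂ)) with hF
  set F' : ℝ → ℝ → ℂ := fun s l =>
    Complex.exp (-Complex.I * (x : ℂ) * (l : ℂ)) *
      (ψ l * Complex.exp (ψ l * (s : ℂ))) with hF'
  have hmeasψ : Measurable ψ := my_measurable_psiSymb α δ hα.le
  have hmeas0 : Measurable fun l : ℝ => Complex.exp (-Complex.I * (x : ℂ) * (l : ℂ)) := by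
    exact Complex.measurable_exp.comp (measurable_const.mul Complex.measurable_ofReal)
  have hmeasF : ∀ s : ℝ, AEStronglyMeasurable (F s) volume := by
    intro s
    exact ((hmeas0.mul (Complex.measurable_exp.comp
      (hmeasψ.mul measurable_const)))).aestronglyMeasurable
  have hmeasF' : AEStronglyMeasurable (F' t) volume := by
    exact ((hmeas0.mul (hmeasψ.mul (Complex.measurable_exp.comp
      (hmeasψ.mul measurable_const))))).aestronglyMeasurable
  have hnorm1 : ∀ l : ℝ, ‖Complex.exp (-Complex.I * (x : ℂ) * (l : ℂ))‖ = 1 := by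
    intro l
    rw [Complex.norm_exp]
    norm_num [Complex.mul_re]
  have hnorm2 : ∀ (s : ℝ) (l : ℝ), ‖Complex.exp (ψ l * (s : ℂ))‖ = Real.exp ((ψ l).re * s) := by
    intro s l
    rw [Complex.norm_exp]
    norm_num [Complex.mul_re]
  -- integrability of F t
  have hF_int : Integrable (F t) volume := by
    apply Integrable.mono' (g := fun l : ℝ => Real.exp (-(c * t) * |l| ^ α))
    · have h := my_integrable_aux (a := c * t) (q := α) (s := 0)
        (by positivity) hα le_rfl
      simpa using h
    · exact hmeasF t
    · refine Eventually.of_forall fun l => ?_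
      rw [hF, norm_mul, hnorm1 l, one_mul, hnorm2 t l]
      apply Real.exp_le_exp.mpr
      have := hrec l
      nlinarith [Real.rpow_nonneg (abs_nonneg l) α]
  -- bound for F'
  have h_bound : ∀ᵐ l : ℝ, ∀ s ∈ Metric.ball t (t / 2),
      ‖F' s l‖ ≤ |l| ^ α * Real.exp (-(c * (t / 2)) * |l| ^ α) := by
    refine Eventually.of_forall fun l => fun s hs => ?_
    have hst : t / 2 ≤ s := by
      rw [Metric.mem_ball, Real.dist_eq] at hs
      cases abs_lt.mp hs with
      | intro h1 h2 => linarith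
    rw [hF', norm_mul, hnorm1 l, one_mul, norm_mul, hnorm2 s l, hψdef, my_norm_psiSymb]
    apply mul_le_mul_of_nonneg_left _ (Real.rpow_nonneg (abs_nonneg l) α)
    apply Real.exp_le_exp.mpr
    have h1 := hrec l
    have h0 : (0 : ℝ) ≤ |l| ^ α := Real.rpow_nonneg (abs_nonneg l) α
    have hs0 : (0 : ℝ) ≤ s := by linarith
    have hkey : (0 : ℝ) ≤ c * |l| ^ α * (s - t / 2) :=
      mul_nonneg (mul_nonneg hcpos.le h0) (sub_nonneg.mpr hst)
    calc (ψ l).re * s ≤ (-(c * |l| ^ α)) * s := mul_le_mul_of_nonneg_right h1 hs0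
      _ ≤ -(c * (t / 2)) * |l| ^ α := by nlinarith
  have bound_int : Integrable (fun l : ℝ => |l| ^ α * Real.exp (-(c * (t / 2)) * |l| ^ α)) :=
    my_integrable_aux (by positivity) hα hα.le
  -- differentiability
  have h_diff : ∀ᵐ l : ℝ, ∀ s ∈ Metric.ball t (t / 2), HasDerivAt (F · l) (F' s l) s := by
    refine Eventually.of_forall fun l => fun s _ => ?_
    have h0 : HasDerivAt (fun z : ℂ => Complex.exp (ψ l * z))
        (ψ l * Complex.exp (ψ l * (s : ℂ))) (s : ℂ) := by
      simpa [mul_comm] using ((hasDerivAt_id ((s : ℝ) : ℂ)).const_mul (ψ l)).cexp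
    have h1 := h0.comp_ofReal
    exact h1.const_mul (Complex.exp (-Complex.I * (x : ℂ) * (l : ℂ)))
  have main := (hasDerivAt_integral_of_dominated_loc_of_deriv_le (s := Metric.ball t (t / 2))
    (Metric.ball_mem_nhds t (by positivity)) (Eventually.of_forall hmeasF) hF_int hmeasF' h_bound bound_int h_diff).2
  exact main.const_mul (((1 / (2 * Real.pi) : ℝ) : ℂ))
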